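/- Let P = v_0 v_1 ⋯ v_n be a taut path in G, with edges e_i = v_{i−1}v_i for 1 ≤ i ≤ n, and let ℓ_i = L(e_i). Then for every index i with 1 ≤ i ≤ n−2, if ℓ_i ≥ ℓ_{i+1} and ℓ_{i+1} is finite, then ℓ_{i+1} > ℓ_{i+2}. -/

import Mathlib

open SimpleGraph

variable {V : Type*}

/-- The set of levels (under `L`) of taut neighbours of edge `e` at vertex `v`:
edges `f` of `G` incident to `v` such that the turn from `e` to `f` at `v` is taut. -/
def tautNbrLevels (G : SimpleGraph V) (taut : V → Sym2 V → Sym2 V → Prop)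
    (L : Sym2 V → ℕ∞) (v : V) (e : Sym2 V) : Set ℕ∞ :=
  {n | ∃ f ∈ G.edgeSet, v ∈ f ∧ taut v e f ∧ n = L f}

/-- The monotone operator on `E → ℕ∞` whose least fixed point defines edge levels:
`(levelOp L) e = 1 + min over the endpoints v of e of sup {L f : f taut neighbour of e at v}`
(with `sSup ∅ = 0`). -/
noncomputable def levelOp (G : SimpleGraph V) (taut : V → Sym2 V → Sym2 V → Prop)
    (L : Sym2 V → ℕ∞) (e : Sym2 V) : ℕ∞ :=
  1 + ⨅ v ∈ e, sSup (tautNbrLevels G taut L v e)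

/-- `L` is the edge-level function: the pointwise least fixed point (on edges of `G`)
of the level operator. -/
def IsEdgeLevel (G : SimpleGraph V) (taut : V → Sym2 V → Sym2 V → Prop)
    (L : Sym2 V → ℕ∞) : Prop :=
  (∀ e ∈ G.edgeSet, L e = levelOp G taut L e) ∧
  ∀ L' : Sym2 V → ℕ∞, (∀ e ∈ G.edgeSet, L' e = levelOp G taut L' e) →
    ∀ e ∈ G.edgeSet, L e ≤ L' e

/-- `p 0, p 1, …, p n` is a taut path in `G`: a walk of length `n ≥ 1` such that at every
interior vertex `p i` (`1 ≤ i ≤ n-1`), the turn from edge `p (i-1) p i` to edge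
`p i p (i+1)` is taut. -/
def IsTautPath (G : SimpleGraph V) (taut : V → Sym2 V → Sym2 V → Prop)
    (n : ℕ) (p : ℕ → V) : Prop :=
  1 ≤ n ∧ (∀ i < n, G.Adj (p i) (p (i + 1))) ∧
  ∀ i, 1 ≤ i → i < n → taut (p i) s(p (i - 1), p i) s(p i, p (i + 1))

/-- Along a taut path `p 0 … p n` with edges `e_i = p (i-1) p i` and levels `ℓ_i = L e_i`,
for every `1 ≤ i ≤ n - 2`: if `ℓ i ≥ ℓ (i+1)` and `ℓ (i+1)` is finite, then
`ℓ (i+1) > ℓ (i+2)`. -/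
theorem taut_path_level_once_decreasing
    [Fintype V] (G : SimpleGraph V)
    (taut : V → Sym2 V → Sym2 V → Prop)
    (taut_symm : ∀ v e f, taut v e f → taut v f e)
    (L : Sym2 V → ℕ∞) (hL : IsEdgeLevel G taut L)
    (n : ℕ) (p : ℕ → V) (hp : IsTautPath G taut n p)
    (ℓ : ℕ → ℕ∞) (hℓ : ∀ i, ℓ i = L s(p (i - 1), p i)) :
    ∀ i, 1 ≤ i → i + 2 ≤ n → ℓ (i + 1) ≤ ℓ i → ℓ (i + 1) < ⊤ →
      ℓ (i + 2) < ℓ (i + 1) := by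
  intro i hi hin hle hlt
  obtain ⟨hn, hadj, htaut⟩ := hp
  have hi1 : i - 1 + 1 = i := by omega
  set e1 : Sym2 V := s(p (i - 1), p i) with he1
  set e2 : Sym2 V := s(p i, p (i + 1)) with he2
  set e3 : Sym2 V := s(p (i + 1), p (i + 2)) with he3
  have h1 : G.Adj (p (i - 1)) (p i) := by
    have := hadj (i - 1) (by omega); rwa [hi1] at this
  have h2 : G.Adj (p i) (p (i + 1)) := hadj i (by omega)
  have h3 : G.Adj (p (i + 1)) (p (i + 2)) := hadj (i + 1) (by omega)
  have t1 : taut (p i) e1 e2 := htaut i hi (by omega)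
  have t2 : taut (p (i + 1)) e2 e3 := by
    have := htaut (i + 1) (by omega) (by omega)
    simpa using this
  have hl1 : ℓ i = L e1 := hℓ i
  have hl2 : ℓ (i + 1) = L e2 := by
    have := hℓ (i + 1); simpa using this
  have hl3 : ℓ (i + 2) = L e3 := by
    have := hℓ (i + 2); simpa using this
  set S : V → ℕ∞ := fun v => sSup (tautNbrLevels G taut L v e2) with hS
  have hEq : L e2 = 1 + ⨅ v ∈ e2, S v := hL.1 e2 h2
  -- the infimum over the two endpoints
  have hIle1 : (⨅ v ∈ e2, S v) ≤ S (p i) :=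
    iInf₂_le (p i) (Sym2.mem_mk_left _ _)
  have hIle2 : (⨅ v ∈ e2, S v) ≤ S (p (i + 1)) :=
    iInf₂_le (p (i + 1)) (Sym2.mem_mk_right _ _)
  have hIge : S (p i) ⊓ S (p (i + 1)) ≤ ⨅ v ∈ e2, S v := by
    refine le_iInf fun v => le_iInf fun hv => ?_
    rcases Sym2.mem_iff.mp hv with h | h
    · subst h; exact inf_le_left
    · subst h; exact inf_le_right
  have hA : ℓ i ≤ S (p i) := by
    refine le_sSup ?_
    exact ⟨e1, h1, Sym2.mem_mk_right _ _, taut_symm _ _ _ t1, hl1⟩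
  have hB : ℓ (i + 2) ≤ S (p (i + 1)) := by
    refine le_sSup ?_
    exact ⟨e3, h3, Sym2.mem_mk_left _ _, t2, hl3⟩
  have hne : ℓ (i + 1) ≠ ⊤ := hlt.ne
  rcases le_total (S (p i)) (S (p (i + 1))) with hAB | hBA
  · -- contradiction: the min is at p i, which has level ≥ ℓ (i+1)
    exfalso
    have hI : ℓ (i + 1) ≤ ⨅ v ∈ e2, S v :=
      le_trans (le_trans hle hA) (le_trans (le_inf le_rfl hAB) hIge)
    have : ℓ (i + 1) + 1 ≤ ℓ (i + 1) := by
      calc ℓ (i + 1) + 1 = 1 + ℓ (i + 1) := by rw [add_comm]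
        _ ≤ 1 + ⨅ v ∈ e2, S v := by exact add_le_add le_rfl hI
        _ = ℓ (i + 1) := by rw [hl2, hEq]
    exact absurd ((ENat.add_one_le_iff hne).mp this) (lt_irrefl _)
  · have hI : ℓ (i + 2) ≤ ⨅ v ∈ e2, S v :=
      le_trans hB (le_trans (le_inf hBA le_rfl) hIge)
    have key : ℓ (i + 2) + 1 ≤ ℓ (i + 1) := by
      calc ℓ (i + 2) + 1 = 1 + ℓ (i + 2) := by rw [add_comm]
        _ ≤ 1 + ⨅ v ∈ e2, S v := add_le_add le_rfl hI
        _ = ℓ (i + 1) := by rw [hl2, hEq]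
    have hne2 : ℓ (i + 2) ≠ ⊤ := by
      intro h
      rw [h] at key
      simp at key
      exact hne key
    exact (ENat.add_one_le_iff hne2).mp key
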